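/- arXiv:2605.03263 — 3 statements merged into one kernel-verified Lean document; each statement's English description precedes it below -/
import Mathlib

section
/- Let h ≥ 1 and d₁, …, d_h be positive integers with d = d₁ + ⋯ + d_h. For each i = 1, …, h let M_i, B_i ∈ ℝ^{d_i×d} be matrices with ‖M_i − B_i‖₂ ≤ δ, where δ > 0. Write [M_i]_j ∈ ℝ^{d_i×d_j} for the j-th block column of M_i (and similarly [B_i]_j for B_i). Define the block matrices Â, A ∈ ℝ^{d×d} by Â_{ii} = 0, Â_{ij} = ½([M_i]_j − ([M_j]_i)ᵀ) for i ≠ j, and A_{ii} = 0, A_{ij} = ½([B_i]_j − ([B_j]_i)ᵀ) for i ≠ j. Then ‖Â − A‖₂ ≤ (h − 1)δ. -/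
noncomputable section

/-- The block Euclidean space `ℝ^{d₁} × ⋯ × ℝ^{d_h}` with the ℓ² product norm,
identified with `ℝ^d`, `d = d₁ + ⋯ + d_h`. -/
abbrev Blk {h : ℕ} (d : Fin h → ℕ) : Type :=
  PiLp 2 fun i : Fin h => EuclideanSpace ℝ (Fin (d i))

/-- Projection onto the `i`-th block, as a continuous linear map. -/
noncomputable def blkProj {h : ℕ} (d : Fin h → ℕ) (i : Fin h) :
    Blk d →L[ℝ] EuclideanSpace ℝ (Fin (d i)) :=
  PiLp.proj 2 (fun i : Fin h => EuclideanSpace ℝ (Fin (d i))) i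

/-- Inclusion of the `i`-th block, as a continuous linear map. -/
noncomputable def blkIncl {h : ℕ} (d : Fin h → ℕ) (i : Fin h) :
    EuclideanSpace ℝ (Fin (d i)) →L[ℝ] Blk d :=
  LinearMap.toContinuousLinearMap
    (((WithLp.linearEquiv 2 ℝ (∀ i : Fin h, EuclideanSpace ℝ (Fin (d i)))).symm.toLinearMap).comp
      (LinearMap.single ℝ (fun i : Fin h => EuclideanSpace ℝ (Fin (d i))) i))

/-- The `(i,j)` block of a square map `C : ℝ^d →L ℝ^d`. -/
noncomputable def blkOf {h : ℕ} {d : Fin h → ℕ} (C : Blk d →L[ℝ] Blk d) (i j : Fin h) :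
    EuclideanSpace ℝ (Fin (d j)) →L[ℝ] EuclideanSpace ℝ (Fin (d i)) :=
  (blkProj d i).comp (C.comp (blkIncl d j))


/-- The `j`-th block column of a map `M : ℝ^d →L ℝ^{d_i}`. -/
noncomputable def blkCol {h : ℕ} {d : Fin h → ℕ} {m : ℕ}
    (M : Blk d →L[ℝ] EuclideanSpace ℝ (Fin m)) (j : Fin h) :
    EuclideanSpace ℝ (Fin (d j)) →L[ℝ] EuclideanSpace ℝ (Fin m) :=
  M.comp (blkIncl d j)

section Aux

variable {h : ℕ} {d : Fin h → ℕ}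

lemma blkIncl_norm_le (j : Fin h) : ‖blkIncl d j‖ ≤ 1 := by
  refine ContinuousLinearMap.opNorm_le_bound _ zero_le_one fun v => ?_
  have hv : blkIncl d j v =
      (WithLp.equiv 2 (∀ i : Fin h, EuclideanSpace ℝ (Fin (d i)))).symm (Pi.single j v) := rfl
  rw [hv, one_mul]
  exact (PiLp.norm_single 2 (fun i : Fin h => EuclideanSpace ℝ (Fin (d i))) j v).le

lemma blkCol_norm_le {m : ℕ} (M : Blk d →L[ℝ] EuclideanSpace ℝ (Fin m)) (j : Fin h) :
    ‖blkCol M j‖ ≤ ‖M‖ := by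
  calc ‖blkCol M j‖ ≤ ‖M‖ * ‖blkIncl d j‖ := ContinuousLinearMap.opNorm_comp_le _ _
  _ ≤ ‖M‖ * 1 := by
      exact mul_le_mul_of_nonneg_left (blkIncl_norm_le j) (norm_nonneg _)
  _ = ‖M‖ := mul_one _

lemma blkOf_sub (C D : Blk d →L[ℝ] Blk d) (i j : Fin h) :
    blkOf (C - D) i j = blkOf C i j - blkOf D i j := by
  simp [blkOf, ContinuousLinearMap.sub_comp, ContinuousLinearMap.comp_sub]

lemma blkCol_sub {m : ℕ} (M N : Blk d →L[ℝ] EuclideanSpace ℝ (Fin m)) (j : Fin h) :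
    blkCol (M - N) j = blkCol M j - blkCol N j := by
  simp [blkCol, ContinuousLinearMap.sub_comp]

lemma blkIncl_sum_eq (x : Blk d) : ∑ j, blkIncl d j (x j) = x := by
  apply (WithLp.linearEquiv 2 ℝ (∀ i : Fin h, EuclideanSpace ℝ (Fin (d i)))).injective
  rw [map_sum]
  have : ∀ j, (WithLp.linearEquiv 2 ℝ (∀ i : Fin h, EuclideanSpace ℝ (Fin (d i))))
      (blkIncl d j (x j)) = Pi.single j (x j) := fun j => rfl
  simp only [this]
  exact Finset.univ_sum_single _

end Aux

set_option maxHeartbeats 1000000 in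
/-- **Key skew-correction error lemma (Lemma 2).**
If `‖M_i − B_i‖₂ ≤ δ` for each player `i`, and `Â`, `A` are the block matrices with zero
diagonal blocks and off-diagonal blocks `½([M_i]_j − ([M_j]_i)ᵀ)`, resp.
`½([B_i]_j − ([B_j]_i)ᵀ)`, then `‖Â − A‖₂ ≤ (h − 1)δ`. -/
theorem skew_correction_error_le
    {h : ℕ} (hh : 1 ≤ h) (d : Fin h → ℕ) (hd : ∀ i, 0 < d i)
    (δ : ℝ) (hδ : 0 < δ)
    (M B : ∀ i : Fin h, Blk d →L[ℝ] EuclideanSpace ℝ (Fin (d i)))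
    (hMB : ∀ i, ‖M i - B i‖ ≤ δ)
    (Ahat A : Blk d →L[ℝ] Blk d)
    (hAhat_diag : ∀ i, blkOf Ahat i i = 0)
    (hAhat_off : ∀ i j, i ≠ j → blkOf Ahat i j =
      ((1:ℝ)/2) • (blkCol (M i) j - ContinuousLinearMap.adjoint (blkCol (M j) i)))
    (hA_diag : ∀ i, blkOf A i i = 0)
    (hA_off : ∀ i j, i ≠ j → blkOf A i j =
      ((1:ℝ)/2) • (blkCol (B i) j - ContinuousLinearMap.adjoint (blkCol (B j) i))) :
    ‖Ahat - A‖ ≤ ((h : ℝ) - 1) * δ := by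
  set C := Ahat - A with hCdef
  have hh1 : (1:ℝ) ≤ (h:ℝ) := by exact_mod_cast hh
  have hconst : 0 ≤ ((h:ℝ) - 1) * δ := by nlinarith
  -- block norms
  have hblk : ∀ i j, ‖blkOf C i j‖ ≤ δ := by
    intro i j
    rw [hCdef, blkOf_sub]
    by_cases hij : i = j
    · subst hij
      rw [hAhat_diag, hA_diag, sub_zero, norm_zero]
      exact hδ.le
    · rw [hAhat_off i j hij, hA_off i j hij]
      have hsmul : ((1:ℝ)/2) • (blkCol (M i) j - ContinuousLinearMap.adjoint (blkCol (M j) i))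
          - ((1:ℝ)/2) • (blkCol (B i) j - ContinuousLinearMap.adjoint (blkCol (B j) i))
          = ((1:ℝ)/2) • ((blkCol (M i) j - ContinuousLinearMap.adjoint (blkCol (M j) i))
            - (blkCol (B i) j - ContinuousLinearMap.adjoint (blkCol (B j) i))) :=
        (smul_sub _ _ _).symm
      rw [hsmul]
      have hE1 : ‖blkCol (M i) j - blkCol (B i) j‖ ≤ δ := by
        rw [← blkCol_sub]
        exact (blkCol_norm_le _ j).trans (hMB i)
      have hE2 : ‖ContinuousLinearMap.adjoint (blkCol (M j) i)
          - ContinuousLinearMap.adjoint (blkCol (B j) i)‖ ≤ δ := by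
        rw [← map_sub, LinearIsometryEquiv.norm_map, ← blkCol_sub]
        exact (blkCol_norm_le _ i).trans (hMB j)
      have hre : (blkCol (M i) j - ContinuousLinearMap.adjoint (blkCol (M j) i))
          - (blkCol (B i) j - ContinuousLinearMap.adjoint (blkCol (B j) i))
          = (blkCol (M i) j - blkCol (B i) j)
            - (ContinuousLinearMap.adjoint (blkCol (M j) i)
              - ContinuousLinearMap.adjoint (blkCol (B j) i)) := by abel
      rw [hre]
      have hns := norm_smul ((1:ℝ)/2) ((blkCol (M i) j - blkCol (B i) j)
        - (ContinuousLinearMap.adjoint (blkCol (M j) i)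
          - ContinuousLinearMap.adjoint (blkCol (B j) i)))
      rw [hns]
      have := norm_sub_le (blkCol (M i) j - blkCol (B i) j)
        (ContinuousLinearMap.adjoint (blkCol (M j) i)
          - ContinuousLinearMap.adjoint (blkCol (B j) i))
      have hnn : ‖(1:ℝ)/2‖ = 1/2 := by norm_num [Real.norm_eq_abs]
      rw [hnn]
      nlinarith [this]
  refine ContinuousLinearMap.opNorm_le_bound _ hconst fun x => ?_
  -- block decomposition of C x
  have key : ∀ i, (C x) i = ∑ j ∈ Finset.univ.erase i, blkOf C i j (x j) := by
    intro i
    have h1 : (C x) i = ∑ j, blkOf C i j (x j) := by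
      conv_lhs => rw [← blkIncl_sum_eq x, map_sum]
      have : (C x) i = blkProj d i (C x) := rfl
      calc (∑ j, C (blkIncl d j (x j))) i
          = blkProj d i (∑ j, C (blkIncl d j (x j))) := rfl
        _ = ∑ j, blkProj d i (C (blkIncl d j (x j))) := map_sum _ _ _
        _ = ∑ j, blkOf C i j (x j) := rfl
    rw [h1]
    symm
    apply Finset.sum_erase
    have : blkOf C i i = 0 := by
      rw [hCdef, blkOf_sub, hAhat_diag, hA_diag, sub_zero]
    rw [this]; rfl
  have hni : ∀ i, ‖(C x) i‖ ≤ δ * ∑ j ∈ Finset.univ.erase i, ‖x j‖ := by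
    intro i
    rw [key i, Finset.mul_sum]
    refine (norm_sum_le _ _).trans (Finset.sum_le_sum fun j _ => ?_)
    calc ‖blkOf C i j (x j)‖ ≤ ‖blkOf C i j‖ * ‖x j‖ := ContinuousLinearMap.le_opNorm _ _
      _ ≤ δ * ‖x j‖ := mul_le_mul_of_nonneg_right (hblk i j) (norm_nonneg _)
  -- squared bound
  have hsq : ‖C x‖ ^ 2 ≤ (((h:ℝ) - 1) * δ * ‖x‖) ^ 2 := by
    rw [PiLp.norm_sq_eq_of_L2]
    have hxsq : ‖x‖ ^ 2 = ∑ j, ‖x j‖ ^ 2 := PiLp.norm_sq_eq_of_L2 _ x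
    have step1 : ∀ i, ‖(C x) i‖ ^ 2 ≤
        δ ^ 2 * (((h:ℝ) - 1) * ∑ j ∈ Finset.univ.erase i, ‖x j‖ ^ 2) := by
      intro i
      have h2 : (∑ j ∈ Finset.univ.erase i, ‖x j‖) ^ 2 ≤
          ((h:ℝ) - 1) * ∑ j ∈ Finset.univ.erase i, ‖x j‖ ^ 2 := by
        have := sq_sum_le_card_mul_sum_sq
          (s := Finset.univ.erase i) (f := fun j => ‖x j‖)
        have hcard : ((Finset.univ.erase i).card : ℝ) = (h:ℝ) - 1 := by
          rw [Finset.card_erase_of_mem (Finset.mem_univ i)]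
          simp only [Finset.card_univ, Fintype.card_fin]
          have : 1 ≤ h := hh
          push_cast [Nat.cast_sub this]
          ring
        rw [hcard] at this
        exact this
      have h3 := hni i
      have h4 : 0 ≤ ∑ j ∈ Finset.univ.erase i, ‖x j‖ :=
        Finset.sum_nonneg fun j _ => norm_nonneg _
      set a := ‖(C x) i‖ with ha
      set S := ∑ j ∈ Finset.univ.erase i, ‖x j‖ with hS
      set T := ∑ j ∈ Finset.univ.erase i, ‖x j‖ ^ 2 with hT
      nlinarith [norm_nonneg ((C x) i), sq_nonneg (a - δ * S)]
    have step2 : ∑ i, ‖(C x) i‖ ^ 2 ≤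
        δ ^ 2 * (((h:ℝ) - 1) * ∑ i, (∑ j ∈ Finset.univ.erase i, ‖x j‖ ^ 2)) := by
      rw [Finset.mul_sum, Finset.mul_sum]
      exact Finset.sum_le_sum fun i _ => step1 i
    have step3 : ∑ i : Fin h, (∑ j ∈ Finset.univ.erase i, ‖x j‖ ^ 2)
        = ((h:ℝ) - 1) * ∑ j, ‖x j‖ ^ 2 := by
      have : ∀ i : Fin h, ∑ j ∈ Finset.univ.erase i, ‖x j‖ ^ 2
          = (∑ j, ‖x j‖ ^ 2) - ‖x i‖ ^ 2 := fun i =>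
        Finset.sum_erase_eq_sub (Finset.mem_univ i)
      simp only [this, Finset.sum_sub_distrib, Finset.sum_const, Finset.card_univ,
        Fintype.card_fin, nsmul_eq_mul]
      ring
    calc ∑ i, ‖(C x) i‖ ^ 2
        ≤ δ ^ 2 * (((h:ℝ) - 1) * (((h:ℝ) - 1) * ∑ j, ‖x j‖ ^ 2)) := by rw [← step3]; exact step2
      _ = (((h:ℝ) - 1) * δ * ‖x‖) ^ 2 := by rw [← hxsq]; ring
  have := Real.sqrt_le_sqrt hsq
  rwa [Real.sqrt_sq (norm_nonneg _), Real.sqrt_sq (by positivity)] at this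
end
end

section
/- Let h ≥ 1 and d₁, …, d_h be positive integers with d = d₁ + ⋯ + d_h. Let C ∈ ℝ^{d×d} be a block matrix with blocks C_{ij} ∈ ℝ^{d_i×d_j} such that C_{ii} = 0 for all i and ‖C_{ij}‖₂ ≤ δ for all i ≠ j, where δ ≥ 0. Then ‖C‖₂ ≤ (h − 1)δ. -/
noncomputable section

/-- **Operator-norm estimate for block-hollow matrices.**
If `C ∈ ℝ^{d×d}` has blocks `C_{ij} ∈ ℝ^{d_i×d_j}` with `C_{ii} = 0` and
`‖C_{ij}‖₂ ≤ δ` for `i ≠ j`, then `‖C‖₂ ≤ (h − 1)δ`. -/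
theorem block_hollow_opNorm_le
    {h : ℕ} (hh : 1 ≤ h) (d : Fin h → ℕ) (hd : ∀ i, 0 < d i)
    (δ : ℝ) (hδ : 0 ≤ δ)
    (C : Blk d →L[ℝ] Blk d)
    (hdiag : ∀ i, blkOf C i i = 0)
    (hoff : ∀ i j, i ≠ j → ‖blkOf C i j‖ ≤ δ) :
    ‖C‖ ≤ ((h : ℝ) - 1) * δ := by
  have hh1 : (1 : ℝ) ≤ (h : ℝ) := by exact_mod_cast hh
  have hB : (0:ℝ) ≤ ((h : ℝ) - 1) * δ := by
    have := sub_nonneg.mpr hh1; positivity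
  refine C.opNorm_le_bound hB (fun x => ?_)
  set a : Fin h → ℝ := fun j => ‖x j‖ with ha
  have hann : ∀ j, 0 ≤ a j := fun j => norm_nonneg _
  set S : ℝ := ∑ j, a j with hS
  set T : ℝ := ∑ j, a j ^ 2 with hT
  -- decomposition and blockwise formula
  have hx : ∑ j : Fin h, blkIncl d j (x j) = x := by
    apply WithLp.ofLp_injective 2
    rw [WithLp.ofLp_sum]
    exact Finset.univ_sum_single x.ofLp
  have hCx : ∀ i : Fin h, (C x) i = ∑ j : Fin h, blkOf C i j (x j) := by
    intro i
    have e1 : C x = ∑ j : Fin h, C (blkIncl d j (x j)) := by rw [← map_sum, hx]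
    rw [e1]
    show blkProj d i (∑ j : Fin h, C (blkIncl d j (x j))) = _
    rw [map_sum]
    rfl
  -- blockwise norm bound
  have hblk : ∀ i : Fin h, ‖(C x) i‖ ≤ δ * (S - a i) := by
    intro i
    rw [hCx i]
    calc ‖∑ j : Fin h, blkOf C i j (x j)‖ ≤ ∑ j : Fin h, ‖blkOf C i j (x j)‖ :=
          norm_sum_le _ _
      _ = ∑ j ∈ Finset.univ.erase i, ‖blkOf C i j (x j)‖ := by
          rw [eq_comm, Finset.sum_erase_eq_sub (Finset.mem_univ i)]
          simp [hdiag i]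
      _ ≤ ∑ j ∈ Finset.univ.erase i, δ * a j := by
          refine Finset.sum_le_sum (fun j hj => ?_)
          have hji : j ≠ i := Finset.ne_of_mem_erase hj
          calc ‖blkOf C i j (x j)‖ ≤ ‖blkOf C i j‖ * ‖x j‖ := (blkOf C i j).le_opNorm _
            _ ≤ δ * a j := by
                exact mul_le_mul_of_nonneg_right (hoff i j hji.symm) (norm_nonneg _)
      _ = δ * (S - a i) := by
          rw [← Finset.mul_sum, Finset.sum_erase_eq_sub (Finset.mem_univ i)]
  have hSa : ∀ i, a i ≤ S := fun i =>
    Finset.single_le_sum (fun j _ => hann j) (Finset.mem_univ i)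
  -- norm squared
  have hT' : ‖x‖ ^ 2 = T := PiLp.norm_sq_eq_of_L2 _ x
  have hCx2 : ‖C x‖ ^ 2 ≤ δ ^ 2 * (((h:ℝ) - 2) * S ^ 2 + T) := by
    have h1 : ‖C x‖ ^ 2 = ∑ i, ‖(C x) i‖ ^ 2 := PiLp.norm_sq_eq_of_L2 _ _
    have h2 : ∑ i, ‖(C x) i‖ ^ 2 ≤ ∑ i, (δ * (S - a i)) ^ 2 := by
      refine Finset.sum_le_sum (fun i _ => ?_)
      have := hblk i
      have h0 : (0:ℝ) ≤ ‖(C x) i‖ := norm_nonneg _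
      nlinarith [hSa i]
    have h3 : ∑ i, (δ * (S - a i)) ^ 2 = δ ^ 2 * (((h:ℝ) - 2) * S ^ 2 + T) := by
      have : ∑ i, (δ * (S - a i)) ^ 2
          = ∑ i, (δ ^ 2 * S ^ 2 - 2 * δ ^ 2 * S * a i + δ ^ 2 * a i ^ 2) := by
        refine Finset.sum_congr rfl (fun i _ => by ring)
      rw [this, Finset.sum_add_distrib, Finset.sum_sub_distrib, Finset.sum_const,
        ← Finset.mul_sum, ← Finset.mul_sum, ← hS, ← hT]
      simp only [Finset.card_univ, Fintype.card_fin, nsmul_eq_mul]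
      ring
    rw [h1]; exact h2.trans_eq h3
  -- key scalar inequality
  have hkey : ((h:ℝ) - 2) * S ^ 2 + T ≤ ((h:ℝ) - 1) ^ 2 * T := by
    rcases eq_or_lt_of_le hh1 with h1 | h2
    · -- h = 1
      have hST : T ≤ S ^ 2 := by
        rw [hS, hT]
        exact Finset.sum_sq_le_sq_sum_of_nonneg (fun j _ => hann j)
      nlinarith
    · -- h ≥ 2
      have hh2 : (2:ℝ) ≤ (h:ℝ) := by
        have : 1 < h := by exact_mod_cast h2
        exact_mod_cast this
      have hCS : S ^ 2 ≤ (h:ℝ) * T := by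
        have := sq_sum_le_card_mul_sum_sq (s := (Finset.univ : Finset (Fin h))) (f := a)
        simpa [hS, hT] using this
      have hTnn : 0 ≤ T := Finset.sum_nonneg (fun j _ => sq_nonneg _)
      nlinarith
  -- conclude
  have hfin : ‖C x‖ ^ 2 ≤ (((h:ℝ) - 1) * δ * ‖x‖) ^ 2 := by
    calc ‖C x‖ ^ 2 ≤ δ ^ 2 * (((h:ℝ) - 2) * S ^ 2 + T) := hCx2
      _ ≤ δ ^ 2 * (((h:ℝ) - 1) ^ 2 * T) := by
          exact mul_le_mul_of_nonneg_left hkey (sq_nonneg δ)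
      _ = (((h:ℝ) - 1) * δ * ‖x‖) ^ 2 := by rw [← hT']; ring
  have hrhs : 0 ≤ ((h:ℝ) - 1) * δ * ‖x‖ := by positivity
  nlinarith [norm_nonneg (C x)]
end
end

section
/- Let H ∈ ℝ^{d×d} be an invertible matrix, let S = ½(H + Hᵀ) be positive semidefinite, and let A = ½(H − Hᵀ). Then there exist η > 0 and τ > 0 such that ‖I − η(I − τA)H‖₂ < 1. -/
noncomputable section

open scoped RealInnerProductSpace

set_option maxHeartbeats 1000000

/-- Pure-real arithmetic helper: the key estimate for the quadratic form. -/
private lemma sga_aux_quad {τ cS δ qv x s w nv : ℝ} (hτ0 : 0 < τ) (hτ1 : τ ≤ 1)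
    (hτc : τ * cS ≤ 1) (hw : -(x * s) ≤ w) (hs : s ^ 2 ≤ cS * qv) (hq : 0 ≤ qv)
    (hc : δ * nv ^ 2 ≤ qv + x ^ 2) :
    (τ * δ / 2) * nv ^ 2 ≤ qv + τ * w + τ * x ^ 2 := by
  nlinarith [mul_le_mul_of_nonneg_left hw hτ0.le,
    mul_le_mul_of_nonneg_left hs hτ0.le,
    mul_le_mul_of_nonneg_right hτc hq,
    mul_nonneg hτ0.le (sq_nonneg (x - s)),
    mul_le_mul_of_nonneg_left hc hτ0.le,
    mul_le_mul_of_nonneg_right hτ1 hq]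

/-- Pure-real arithmetic helper: `a⁴ ≤ n a² q` implies `a² ≤ (n+1) q`. -/
private lemma sga_aux_div {a n q : ℝ} (ha : 0 ≤ a) (hn : 0 ≤ n) (hq : 0 ≤ q)
    (h : a ^ 2 * a ^ 2 ≤ n * a ^ 2 * q) : a ^ 2 ≤ (n + 1) * q := by
  rcases eq_or_lt_of_le (sq_nonneg a) with h8 | h8
  · nlinarith
  · have h1 : a ^ 2 * a ^ 2 ≤ (n * q) * a ^ 2 := by nlinarith
    have h2 : a ^ 2 ≤ n * q := le_of_mul_le_mul_right h1 h8
    nlinarith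

/-- **SGA monotonicity / contractivity of the frozen map.**
If `H ∈ ℝ^{d×d}` is invertible, its symmetric part `S = ½(H + Hᵀ)` is positive
semidefinite, and `A = ½(H − Hᵀ)` is its antisymmetric part, then there exist
`η > 0` and `τ > 0` such that `‖I − η(I − τA)H‖₂ < 1`. -/
theorem exists_stepsizes_frozen_contractive
    {d : ℕ} (H : EuclideanSpace ℝ (Fin d) →L[ℝ] EuclideanSpace ℝ (Fin d))
    (hH : IsUnit H)
    (S A : EuclideanSpace ℝ (Fin d) →L[ℝ] EuclideanSpace ℝ (Fin d))
    (hS : S = ((1:ℝ)/2) • (H + ContinuousLinearMap.adjoint H))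
    (hA : A = ((1:ℝ)/2) • (H - ContinuousLinearMap.adjoint H))
    (hSpsd : ∀ v : EuclideanSpace ℝ (Fin d), 0 ≤ ⟪v, S v⟫) :
    ∃ η > (0:ℝ), ∃ τ > (0:ℝ),
      ‖(1 : EuclideanSpace ℝ (Fin d) →L[ℝ] EuclideanSpace ℝ (Fin d)) -
        η • (((1 : EuclideanSpace ℝ (Fin d) →L[ℝ] EuclideanSpace ℝ (Fin d)) - τ • A) * H)‖
        < 1 := by
  classical
  set E := EuclideanSpace ℝ (Fin d)
  -- self-adjointness of S, skew-adjointness of A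
  have hSadj : ContinuousLinearMap.adjoint S = S := by
    rw [hS]
    simp [map_add, ContinuousLinearMap.adjoint_adjoint, add_comm]
  have hAadj : ContinuousLinearMap.adjoint A = -A := by
    rw [hA]
    simp [map_sub, ContinuousLinearMap.adjoint_adjoint, smul_sub, neg_sub]
  have hSA : S + A = H := by
    rw [hS, hA]
    module
  have hSsymm : ∀ v w : E, ⟪v, S w⟫ = ⟪S v, w⟫ := by
    intro v w
    conv_rhs => rw [← hSadj]
    rw [ContinuousLinearMap.adjoint_inner_left]
  have hAskew : ∀ v w : E, ⟪v, A w⟫ = -⟪A v, w⟫ := by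
    intro v w
    have h := ContinuousLinearMap.adjoint_inner_left A w v
    rw [hAadj] at h
    rw [← h]
    simp
  have hAvv : ∀ v : E, ⟪v, A v⟫ = 0 := by
    intro v
    have h1 := hAskew v v
    have h2 : ⟪A v, v⟫ = ⟪v, A v⟫ := real_inner_comm _ _
    rw [h2] at h1
    linarith
  -- Cauchy-Schwarz for the psd form
  have hCS : ∀ x y : E, ⟪x, S y⟫ ^ 2 ≤ ⟪x, S x⟫ * ⟪y, S y⟫ := by
    intro x y
    have key : ∀ t : ℝ, 0 ≤ ⟪y, S y⟫ * (t * t) + (2 * ⟪x, S y⟫) * t + ⟪x, S x⟫ := by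
      intro t
      have h0 := hSpsd (x + t • y)
      have hexp : ⟪x + t • y, S (x + t • y)⟫
          = ⟪y, S y⟫ * (t * t) + (2 * ⟪x, S y⟫) * t + ⟪x, S x⟫ := by
        rw [map_add, map_smul]
        rw [inner_add_left, inner_add_right, inner_add_right]
        rw [real_inner_smul_left, real_inner_smul_left, real_inner_smul_right,
          real_inner_smul_right]
        have hyx : ⟪y, S x⟫ = ⟪x, S y⟫ := by
          rw [hSsymm y x, real_inner_comm]
        rw [hyx]; ring
      rw [hexp] at h0
      exact h0
    have hd := discrim_le_zero key
    rw [discrim] at hd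
    nlinarith [hd]
  -- norm bound for S
  set cS : ℝ := ‖S‖ + 1 with hcS
  have hcS1 : (1:ℝ) ≤ cS := by linarith [norm_nonneg S]
  have hcS0 : (0:ℝ) < cS := by linarith
  have hSnorm : ∀ v : E, ‖S v‖ ^ 2 ≤ cS * ⟪v, S v⟫ := by
    intro v
    have h1 := hCS (S v) v
    have h2 : ⟪S v, S v⟫ = ‖S v‖ ^ 2 := real_inner_self_eq_norm_sq _
    have h3 : ⟪S v, S (S v)⟫ ≤ ‖S v‖ * ‖S (S v)‖ := real_inner_le_norm _ _
    have h4 : ‖S (S v)‖ ≤ ‖S‖ * ‖S v‖ := S.le_opNorm _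
    have h5 : (0:ℝ) ≤ ‖S v‖ := norm_nonneg _
    have h6 : (0:ℝ) ≤ ‖S‖ := norm_nonneg _
    have hq : (0:ℝ) ≤ ⟪v, S v⟫ := hSpsd v
    have h7 : ‖S v‖ ^ 2 * ‖S v‖ ^ 2 ≤ ‖S‖ * ‖S v‖ ^ 2 * ⟪v, S v⟫ := by
      rw [h2] at h1
      nlinarith [h1, mul_le_mul_of_nonneg_right h3 hq,
        mul_le_mul_of_nonneg_right (mul_le_mul_of_nonneg_left h4 h5) hq]
    have := sga_aux_div h5 h6 hq h7
    rw [hcS]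
    linarith
  -- coercivity: q(v) + ‖Av‖² ≥ δ‖v‖²
  obtain ⟨u, hu⟩ := hH
  set k : ℝ := ‖((u⁻¹ : (E →L[ℝ] E)ˣ) : E →L[ℝ] E)‖ + 1 with hk
  have hk0 : (0:ℝ) < k := by positivity
  have hlow : ∀ v : E, ‖v‖ ≤ k * ‖H v‖ := by
    intro v
    have hv : v = ((u⁻¹ : (E →L[ℝ] E)ˣ) : E →L[ℝ] E) (H v) := by
      rw [← hu]
      calc v = ((↑u⁻¹ * ↑u : E →L[ℝ] E)) v := by rw [u.inv_mul]; simp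
        _ = ((u⁻¹ : (E →L[ℝ] E)ˣ) : E →L[ℝ] E) ((u : E →L[ℝ] E) v) := rfl
    calc ‖v‖ = ‖((u⁻¹ : (E →L[ℝ] E)ˣ) : E →L[ℝ] E) (H v)‖ := by rw [← hv]
      _ ≤ ‖((u⁻¹ : (E →L[ℝ] E)ˣ) : E →L[ℝ] E)‖ * ‖H v‖ := ContinuousLinearMap.le_opNorm _ _
      _ ≤ k * ‖H v‖ := by
          have : (0:ℝ) ≤ ‖H v‖ := norm_nonneg _
          nlinarith
  set δ : ℝ := 1 / (2 * cS * k ^ 2) with hδ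
  have hδ0 : (0:ℝ) < δ := by positivity
  have hcoer : ∀ v : E, δ * ‖v‖ ^ 2 ≤ ⟪v, S v⟫ + ‖A v‖ ^ 2 := by
    intro v
    have h1 : ‖H v‖ ^ 2 ≤ 2 * ‖S v‖ ^ 2 + 2 * ‖A v‖ ^ 2 := by
      have hHv : H v = S v + A v := by rw [← hSA]; simp
      rw [hHv]
      have hn := norm_add_sq_real (S v) (A v)
      have hin : ⟪S v, A v⟫ ≤ ‖S v‖ * ‖A v‖ := real_inner_le_norm _ _
      nlinarith [sq_nonneg (‖S v‖ - ‖A v‖)]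
    have h2 := hlow v
    have h3 := hSnorm v
    have hq := hSpsd v
    have h4 : ‖v‖ ^ 2 ≤ k ^ 2 * ‖H v‖ ^ 2 := by
      have := mul_self_le_mul_self (norm_nonneg v) h2
      nlinarith [this]
    have h5 : ‖v‖ ^ 2 ≤ 2 * cS * k ^ 2 * (⟪v, S v⟫ + ‖A v‖ ^ 2) := by
      nlinarith [h4, mul_le_mul_of_nonneg_left h1 (sq_nonneg k),
        mul_le_mul_of_nonneg_left h3 (sq_nonneg k),
        mul_nonneg (mul_nonneg (by linarith : (0:ℝ) ≤ cS - 1) (sq_nonneg k))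
          (sq_nonneg ‖A v‖)]
    rw [hδ, div_mul_eq_mul_div, div_le_iff₀ (by positivity)]
    nlinarith [h5]
  -- choose τ
  set τ : ℝ := min 1 (1 / cS) with hτ
  have hτ0 : (0:ℝ) < τ := by
    apply lt_min one_pos; positivity
  have hτ1 : τ ≤ 1 := min_le_left _ _
  have hτc : τ * cS ≤ 1 := by
    have hm := min_le_right (1:ℝ) (1 / cS)
    calc τ * cS ≤ (1 / cS) * cS := by nlinarith
      _ = 1 := by field_simp
  set B : E →L[ℝ] E := ((1 : E →L[ℝ] E) - τ • A) * H with hB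
  -- lower bound on the quadratic form of B
  set μ : ℝ := τ * δ / 2 with hμ
  have hμ0 : (0:ℝ) < μ := by positivity
  have hquad : ∀ v : E, μ * ‖v‖ ^ 2 ≤ ⟪v, B v⟫ := by
    intro v
    have hBv : B v = H v - τ • A (H v) := by
      simp [hB, ContinuousLinearMap.mul_apply, ContinuousLinearMap.sub_apply,
        ContinuousLinearMap.smul_apply]
    have h1 : ⟪v, B v⟫ = ⟪v, H v⟫ - τ * ⟪v, A (H v)⟫ := by
      rw [hBv, inner_sub_right, real_inner_smul_right]
    have hHv : H v = S v + A v := by rw [← hSA]; simp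
    have h2 : ⟪v, H v⟫ = ⟪v, S v⟫ := by
      rw [hHv, inner_add_right, hAvv v, add_zero]
    have h3 : ⟪v, A (H v)⟫ = -⟪A v, S v⟫ - ‖A v‖ ^ 2 := by
      rw [hAskew v (H v), hHv, inner_add_right]
      have hAA : ⟪A v, A v⟫ = ‖A v‖ ^ 2 := real_inner_self_eq_norm_sq _
      rw [hAA]; ring
    rw [h1, h2, h3]
    have hcross : -(‖A v‖ * ‖S v‖) ≤ ⟪A v, S v⟫ := by
      have habs := abs_real_inner_le_norm (A v) (S v)
      have := abs_le.mp habs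
      linarith [this.1]
    have key := sga_aux_quad hτ0 hτ1 hτc hcross (hSnorm v) (hSpsd v) (hcoer v)
    rw [hμ]
    linarith [key]
  -- choose η
  set K : ℝ := ‖B‖ ^ 2 + μ ^ 2 + 1 with hK
  have hK0 : (0:ℝ) < K := by positivity
  set η : ℝ := μ / K with hη
  have hη0 : (0:ℝ) < η := by positivity
  have hημ1 : η * μ < 1 := by
    rw [hη, div_mul_eq_mul_div, div_lt_one hK0]
    nlinarith [sq_nonneg ‖B‖]
  have hημ0 : (0:ℝ) < η * μ := by positivity
  refine ⟨η, hη0, τ, hτ0, ?_⟩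
  have hbound : ∀ v : E, ‖((1 : E →L[ℝ] E) - η • B) v‖ ≤ Real.sqrt (1 - η * μ) * ‖v‖ := by
    intro v
    have happ : ((1 : E →L[ℝ] E) - η • B) v = v - η • B v := by
      simp [ContinuousLinearMap.sub_apply]
    have hsq : ‖v - η • B v‖ ^ 2 = ‖v‖ ^ 2 - 2 * η * ⟪v, B v⟫ + η ^ 2 * ‖B v‖ ^ 2 := by
      rw [norm_sub_sq_real, real_inner_smul_right, norm_smul]
      rw [Real.norm_eq_abs, abs_of_pos hη0]
      ring
    have hBn : ‖B v‖ ^ 2 ≤ ‖B‖ ^ 2 * ‖v‖ ^ 2 := by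
      have := B.le_opNorm v
      nlinarith [norm_nonneg (B v), norm_nonneg v, norm_nonneg B]
    have hqd := hquad v
    have hηB : η * ‖B‖ ^ 2 ≤ μ := by
      rw [hη, div_mul_eq_mul_div, div_le_iff₀ hK0]
      nlinarith [sq_nonneg μ]
    have hle : ‖v - η • B v‖ ^ 2 ≤ (1 - η * μ) * ‖v‖ ^ 2 := by
      rw [hsq]
      nlinarith [sq_nonneg ‖v‖, mul_le_mul_of_nonneg_left hqd hη0.le,
        mul_le_mul_of_nonneg_right hηB (sq_nonneg ‖v‖),
        mul_le_mul_of_nonneg_left hBn (sq_nonneg η)]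
    rw [happ]
    have h1 : (0:ℝ) ≤ 1 - η * μ := by linarith
    calc ‖v - η • B v‖ = Real.sqrt (‖v - η • B v‖ ^ 2) := by
          rw [Real.sqrt_sq (norm_nonneg _)]
      _ ≤ Real.sqrt ((1 - η * μ) * ‖v‖ ^ 2) := Real.sqrt_le_sqrt hle
      _ = Real.sqrt (1 - η * μ) * ‖v‖ := by
          rw [Real.sqrt_mul h1, Real.sqrt_sq (norm_nonneg _)]
  have hop : ‖(1 : E →L[ℝ] E) - η • B‖ ≤ Real.sqrt (1 - η * μ) :=
    ContinuousLinearMap.opNorm_le_bound _ (Real.sqrt_nonneg _) hbound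
  have hlt : Real.sqrt (1 - η * μ) < 1 := by
    have h := Real.sqrt_lt_sqrt (by linarith : (0:ℝ) ≤ 1 - η * μ)
      (by linarith : 1 - η * μ < 1)
    rwa [Real.sqrt_one] at h
  calc ‖(1 : E →L[ℝ] E) - η • B‖ ≤ Real.sqrt (1 - η * μ) := hop
    _ < 1 := hlt
end
end
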